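/- Let V : ℝ³ → ℝ be differentiable with V and x·∇V bounded on ℝ³, and let μ > 0. Then μ · inf{ I_V(φ) : φ differentiable, φ, ∇φ ∈ L²(ℝ³), φ ∈ L⁴(ℝ³), M(φ) ≤ μ, K_{V,2}(φ) ≤ 0, G(φ) ≥ 1 } = inf{ (1/2)G(ψ) + (1/4)∫ μ²·((x·∇V)(μx) + 2V(μx))·|ψ(x)|² dx : ψ differentiable, ψ, ∇ψ ∈ L²(ℝ³), ψ ∈ L⁴(ℝ³), M(ψ) ≤ 1, K₀,₂(ψ) ≤ (1/2)∫ μ²·(x·∇V)(μx)·|ψ(x)|² dx, G(ψ) ≥ μ }, the two admissible sets being in bijective correspondence via the rescaling ψ(x) = μ·φ(μx). -/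

import Mathlib

open MeasureTheory Pointwise

noncomputable section

abbrev R3 := EuclideanSpace ℝ (Fin 3)

/-- Mass: `M(φ) = (1/2) ∫ |φ|²`. -/
def Mfun {E : Type*} [NormedAddCommGroup E] (φ : R3 → E) : ℝ :=
  (1 / 2) * ∫ x, ‖φ x‖ ^ 2

/-- Kinetic energy: `H₀(φ) = (1/2) ∫ |∇φ|²`. -/
def H0 {E : Type*} [NormedAddCommGroup E] [NormedSpace ℝ E] (φ : R3 → E) : ℝ :=
  (1 / 2) * ∫ x, ‖fderiv ℝ φ x‖ ^ 2

/-- Quartic functional: `G(φ) = (1/4) ∫ |φ|⁴`. -/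
def Gfun {E : Type*} [NormedAddCommGroup E] (φ : R3 → E) : ℝ :=
  (1 / 4) * ∫ x, ‖φ x‖ ^ 4

/-- Free energy: `E₀(φ) = H₀(φ) - G(φ)`. -/
def E0 {E : Type*} [NormedAddCommGroup E] [NormedSpace ℝ E] (φ : R3 → E) : ℝ :=
  H0 φ - Gfun φ

/-- The radial derivative of the potential: `(x·∇V)(x) = ⟨x, ∇V(x)⟩ = (DV(x))(x)`. -/
def xdV (V : R3 → ℝ) (x : R3) : ℝ := fderiv ℝ V x x

/-- Free virial functional: `K₀,₂(φ) = 2H₀(φ) - 3G(φ)`. -/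
def K02 {E : Type*} [NormedAddCommGroup E] [NormedSpace ℝ E] (φ : R3 → E) : ℝ :=
  2 * H0 φ - 3 * Gfun φ

/-- Virial functional with potential:
`K_{V,2}(φ) = 2H₀(φ) - 3G(φ) - (1/2) ∫ (x·∇V) |φ|²`. -/
def K2 {E : Type*} [NormedAddCommGroup E] [NormedSpace ℝ E]
    (V : R3 → ℝ) (φ : R3 → E) : ℝ :=
  2 * H0 φ - 3 * Gfun φ - (1 / 2) * ∫ x, xdV V x * ‖φ x‖ ^ 2

/-- `I_V(φ) = (1/2)G(φ) + (1/4) ∫ ((x·∇V) + 2V) |φ|²`. -/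
def IV {E : Type*} [NormedAddCommGroup E] (V : R3 → ℝ) (φ : R3 → E) : ℝ :=
  (1 / 2) * Gfun φ + (1 / 4) * ∫ x, (xdV V x + 2 * V x) * ‖φ x‖ ^ 2

/-- Energy with potential: `E_V(φ) = H₀(φ) + (1/2)∫ V|φ|² - G(φ)`. -/
def EV {E : Type*} [NormedAddCommGroup E] [NormedSpace ℝ E]
    (V : R3 → ℝ) (φ : R3 → E) : ℝ :=
  H0 φ + (1 / 2) * ∫ x, V x * ‖φ x‖ ^ 2 - Gfun φ

lemma finrank_R3 : Module.finrank ℝ R3 = 3 := by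
  simp [finrank_euclideanSpace]

lemma integral_scale (c : ℝ) (hc : 0 < c) (f : R3 → ℝ) :
    ∫ x, f (c • x) = c⁻¹ ^ 3 * ∫ x, f x := by
  rw [MeasureTheory.Measure.integral_comp_smul volume f c]
  rw [finrank_R3, smul_eq_mul, abs_of_pos (by positivity), inv_pow]

lemma fderiv_scale (c : ℝ) (φ : R3 → ℂ) (hφ : Differentiable ℝ φ) (x : R3) :
    fderiv ℝ (fun y => (c : ℂ) * φ (c • y)) x
      = (c : ℂ) • (c • fderiv ℝ φ (c • x)) := by
  have hL : HasFDerivAt (fun y : R3 => c • y) (c • ContinuousLinearMap.id ℝ R3) x := by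
    exact (hasFDerivAt_id x).const_smul c
  have h1 : HasFDerivAt (fun y : R3 => φ (c • y))
      ((fderiv ℝ φ (c • x)).comp (c • ContinuousLinearMap.id ℝ R3)) x :=
    (hφ (c • x)).hasFDerivAt.comp x hL
  have h2 := h1.const_mul ((c : ℂ))
  rw [h2.fderiv]
  have h3 : (fderiv ℝ φ (c • x)).comp (c • ContinuousLinearMap.id ℝ R3)
      = c • fderiv ℝ φ (c • x) := by
    ext v
    simp [_root_.map_smul]
  rw [h3]

lemma diff_scale (c : ℝ) (φ : R3 → ℂ) (hφ : Differentiable ℝ φ) :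
    Differentiable ℝ (fun y => (c : ℂ) * φ (c • y)) := by
  intro x
  have hL : HasFDerivAt (fun y : R3 => c • y) (c • ContinuousLinearMap.id ℝ R3) x := by
    exact (hasFDerivAt_id x).const_smul c
  exact (((hφ (c • x)).hasFDerivAt.comp x hL).const_mul ((c : ℂ))).differentiableAt

lemma norm_fderiv_scale (c : ℝ) (hc : 0 < c) (φ : R3 → ℂ) (hφ : Differentiable ℝ φ) (x : R3) :
    ‖fderiv ℝ (fun y => (c : ℂ) * φ (c • y)) x‖ = c ^ 2 * ‖fderiv ℝ φ (c • x)‖ := by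
  rw [fderiv_scale c φ hφ x]
  rw [norm_smul ((c : ℂ)) (c • fderiv ℝ φ (c • x)), norm_smul c (fderiv ℝ φ (c • x))]
  simp [abs_of_pos hc]
  ring

lemma integral_W_scale (c : ℝ) (hc : 0 < c) (φ : R3 → ℂ) (W : R3 → ℝ) :
    ∫ x, W (c • x) * ‖(c : ℂ) * φ (c • x)‖ ^ 2 = c⁻¹ * ∫ x, W x * ‖φ x‖ ^ 2 := by
  have h : (fun x : R3 => W (c • x) * ‖(c : ℂ) * φ (c • x)‖ ^ 2)
      = fun x => (fun y => c ^ 2 * (W y * ‖φ y‖ ^ 2)) (c • x) := by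
    funext x
    simp [norm_mul, abs_of_pos hc, mul_pow]
    ring
  rw [h, integral_scale c hc (fun y => c ^ 2 * (W y * ‖φ y‖ ^ 2)),
    MeasureTheory.integral_const_mul]
  field_simp

lemma integral_sq_scale (c : ℝ) (hc : 0 < c) (φ : R3 → ℂ) :
    ∫ x, ‖(c : ℂ) * φ (c • x)‖ ^ 2 = c⁻¹ * ∫ x, ‖φ x‖ ^ 2 := by
  have := integral_W_scale c hc φ (fun _ => 1)
  simpa using this

lemma integral_quart_scale (c : ℝ) (hc : 0 < c) (φ : R3 → ℂ) :
    ∫ x, ‖(c : ℂ) * φ (c • x)‖ ^ 4 = c * ∫ x, ‖φ x‖ ^ 4 := by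
  have h : (fun x : R3 => ‖(c : ℂ) * φ (c • x)‖ ^ 4)
      = fun x => (fun y => c ^ 4 * ‖φ y‖ ^ 4) (c • x) := by
    funext x
    simp [norm_mul, abs_of_pos hc, mul_pow]
  rw [h, integral_scale c hc (fun y => c ^ 4 * ‖φ y‖ ^ 4), MeasureTheory.integral_const_mul]
  field_simp

lemma integral_fderiv_scale (c : ℝ) (hc : 0 < c) (φ : R3 → ℂ) (hφ : Differentiable ℝ φ) :
    ∫ x, ‖fderiv ℝ (fun y => (c : ℂ) * φ (c • y)) x‖ ^ 2
      = c * ∫ x, ‖fderiv ℝ φ x‖ ^ 2 := by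
  have h : (fun x : R3 => ‖fderiv ℝ (fun y => (c : ℂ) * φ (c • y)) x‖ ^ 2)
      = fun x => (fun y => c ^ 4 * ‖fderiv ℝ φ y‖ ^ 2) (c • x) := by
    funext x
    rw [norm_fderiv_scale c hc φ hφ x]
    ring
  rw [h, integral_scale c hc (fun y => c ^ 4 * ‖fderiv ℝ φ y‖ ^ 2),
    MeasureTheory.integral_const_mul]
  field_simp

lemma integrable_sq_scale (c : ℝ) (hc : 0 < c) (φ : R3 → ℂ)
    (h : Integrable (fun x => ‖φ x‖ ^ 2)) :
    Integrable (fun x => ‖(c : ℂ) * φ (c • x)‖ ^ 2) := by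
  have h2 := (h.comp_smul hc.ne').const_mul (c ^ 2)
  convert h2 using 1
  funext x
  simp [norm_mul, abs_of_pos hc, mul_pow]

lemma integrable_quart_scale (c : ℝ) (hc : 0 < c) (φ : R3 → ℂ)
    (h : Integrable (fun x => ‖φ x‖ ^ 4)) :
    Integrable (fun x => ‖(c : ℂ) * φ (c • x)‖ ^ 4) := by
  have h2 := (h.comp_smul hc.ne').const_mul (c ^ 4)
  convert h2 using 1
  funext x
  simp [norm_mul, abs_of_pos hc, mul_pow]

lemma integrable_fderiv_scale (c : ℝ) (hc : 0 < c) (φ : R3 → ℂ) (hφ : Differentiable ℝ φ)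
    (h : Integrable (fun x => ‖fderiv ℝ φ x‖ ^ 2)) :
    Integrable (fun x => ‖fderiv ℝ (fun y => (c : ℂ) * φ (c • y)) x‖ ^ 2) := by
  have h2 := (h.comp_smul hc.ne').const_mul (c ^ 4)
  convert h2 using 1
  funext x
  rw [norm_fderiv_scale c hc φ hφ x]
  ring

set_option maxHeartbeats 1600000 in
theorem stmt6 (V : R3 → ℝ) (hV : Differentiable ℝ V)
    (hVbd : ∃ C, ∀ x, |V x| ≤ C) (hxdVbd : ∃ C, ∀ x, |xdV V x| ≤ C)
    (μ : ℝ) (hμ : 0 < μ) :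
    μ * sInf {r : ℝ | ∃ φ : R3 → ℂ,
        Differentiable ℝ φ ∧
        Integrable (fun x => ‖φ x‖ ^ 2) ∧
        Integrable (fun x => ‖fderiv ℝ φ x‖ ^ 2) ∧
        Integrable (fun x => ‖φ x‖ ^ 4) ∧
        Mfun φ ≤ μ ∧ K2 V φ ≤ 0 ∧ 1 ≤ Gfun φ ∧ r = IV V φ}
    = sInf {r : ℝ | ∃ ψ : R3 → ℂ,
        Differentiable ℝ ψ ∧
        Integrable (fun x => ‖ψ x‖ ^ 2) ∧
        Integrable (fun x => ‖fderiv ℝ ψ x‖ ^ 2) ∧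
        Integrable (fun x => ‖ψ x‖ ^ 4) ∧
        Mfun ψ ≤ 1 ∧
        K02 ψ ≤ (1 / 2) * ∫ x, μ ^ 2 * xdV V (μ • x) * ‖ψ x‖ ^ 2 ∧
        μ ≤ Gfun ψ ∧
        r = (1 / 2) * Gfun ψ
          + (1 / 4) * ∫ x, μ ^ 2 * (xdV V (μ • x) + 2 * V (μ • x)) * ‖ψ x‖ ^ 2} := by
  have hμ' : 0 < μ⁻¹ := inv_pos.2 hμ
  set S := {r : ℝ | ∃ φ : R3 → ℂ,
        Differentiable ℝ φ ∧
        Integrable (fun x => ‖φ x‖ ^ 2) ∧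
        Integrable (fun x => ‖fderiv ℝ φ x‖ ^ 2) ∧
        Integrable (fun x => ‖φ x‖ ^ 4) ∧
        Mfun φ ≤ μ ∧ K2 V φ ≤ 0 ∧ 1 ≤ Gfun φ ∧ r = IV V φ} with hSdef
  set T := {r : ℝ | ∃ ψ : R3 → ℂ,
        Differentiable ℝ ψ ∧
        Integrable (fun x => ‖ψ x‖ ^ 2) ∧
        Integrable (fun x => ‖fderiv ℝ ψ x‖ ^ 2) ∧
        Integrable (fun x => ‖ψ x‖ ^ 4) ∧
        Mfun ψ ≤ 1 ∧
        K02 ψ ≤ (1 / 2) * ∫ x, μ ^ 2 * xdV V (μ • x) * ‖ψ x‖ ^ 2 ∧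
        μ ≤ Gfun ψ ∧
        r = (1 / 2) * Gfun ψ
          + (1 / 4) * ∫ x, μ ^ 2 * (xdV V (μ • x) + 2 * V (μ • x)) * ‖ψ x‖ ^ 2} with hTdef
  have hset : T = μ • S := by
    ext r
    simp only [Set.mem_smul_set, smul_eq_mul]
    constructor
    · -- backward direction: given ψ ∈ T, build φ x = μ⁻¹ ψ(μ⁻¹ x)
      rintro ⟨ψ, hdψ, hi2, hid, hi4, hM, hK, hG, hr⟩
      set φ : R3 → ℂ := fun y => ((μ⁻¹ : ℝ) : ℂ) * ψ (μ⁻¹ • y) with hφdef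
      have hdφ : Differentiable ℝ φ := diff_scale μ⁻¹ ψ hdψ
      have hsq : ∫ x, ‖φ x‖ ^ 2 = μ * ∫ x, ‖ψ x‖ ^ 2 := by
        have h := integral_sq_scale μ⁻¹ hμ' ψ
        rw [inv_inv] at h
        exact h
      have hqt : ∫ x, ‖φ x‖ ^ 4 = μ⁻¹ * ∫ x, ‖ψ x‖ ^ 4 :=
        integral_quart_scale μ⁻¹ hμ' ψ
      have hfd : ∫ x, ‖fderiv ℝ φ x‖ ^ 2 = μ⁻¹ * ∫ x, ‖fderiv ℝ ψ x‖ ^ 2 :=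
        integral_fderiv_scale μ⁻¹ hμ' ψ hdψ
      have hWint : ∀ W : R3 → ℝ,
          ∫ x, W x * ‖φ x‖ ^ 2 = μ * ∫ x, W (μ • x) * ‖ψ x‖ ^ 2 := by
        intro W
        have h := integral_W_scale μ⁻¹ hμ' ψ (fun y => W (μ • y))
        simp only [smul_smul, mul_inv_cancel₀ hμ.ne', one_smul, inv_inv] at h
        exact h
      -- pull μ² out of integrals in the ψ-conditions
      have hE : ∫ x, μ ^ 2 * xdV V (μ • x) * ‖ψ x‖ ^ 2
          = μ ^ 2 * ∫ x, xdV V (μ • x) * ‖ψ x‖ ^ 2 := by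
        simp_rw [mul_assoc]
        exact MeasureTheory.integral_const_mul _ _
      have hF : ∫ x, μ ^ 2 * (xdV V (μ • x) + 2 * V (μ • x)) * ‖ψ x‖ ^ 2
          = μ ^ 2 * ∫ x, (xdV V (μ • x) + 2 * V (μ • x)) * ‖ψ x‖ ^ 2 := by
        simp_rw [mul_assoc]
        exact MeasureTheory.integral_const_mul _ _
      refine ⟨IV V φ, ⟨φ, hdφ, ?_, ?_, ?_, ?_, ?_, ?_, rfl⟩, ?_⟩
      · have := integrable_sq_scale μ⁻¹ hμ' ψ hi2
        exact this
      · exact integrable_fderiv_scale μ⁻¹ hμ' ψ hdψ hid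
      · exact integrable_quart_scale μ⁻¹ hμ' ψ hi4
      · -- Mfun φ ≤ μ
        rw [Mfun] at hM ⊢
        rw [hsq]
        nlinarith
      · -- K2 V φ ≤ 0
        rw [K02, H0, Gfun, hE] at hK
        rw [K2, H0, Gfun, hfd, hqt, hWint (xdV V)]
        have key := mul_le_mul_of_nonneg_left hK hμ'.le
        have h2 : μ⁻¹ * (1 / 2 * (μ ^ 2 * ∫ x, xdV V (μ • x) * ‖ψ x‖ ^ 2))
            = 1 / 2 * (μ * ∫ x, xdV V (μ • x) * ‖ψ x‖ ^ 2) := by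
          field_simp
        rw [h2] at key
        nlinarith [key]
      · -- 1 ≤ Gfun φ
        rw [Gfun] at hG ⊢
        rw [hqt]
        nlinarith [mul_le_mul_of_nonneg_left hG hμ'.le, inv_mul_cancel₀ hμ.ne']
      · -- μ * IV V φ = r
        rw [hr, hF]
        rw [IV, Gfun, Gfun, hqt, hWint (fun y => xdV V y + 2 * V y)]
        field_simp
    · -- forward direction: given φ ∈ S, build ψ x = μ φ(μ x)
      rintro ⟨r₀, ⟨φ, hdφ, hi2, hid, hi4, hM, hK, hG, hr₀⟩, hrr⟩
      set ψ : R3 → ℂ := fun y => ((μ : ℝ) : ℂ) * φ (μ • y) with hψdef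
      have hdψ : Differentiable ℝ ψ := diff_scale μ φ hdφ
      have hsq : ∫ x, ‖ψ x‖ ^ 2 = μ⁻¹ * ∫ x, ‖φ x‖ ^ 2 := integral_sq_scale μ hμ φ
      have hqt : ∫ x, ‖ψ x‖ ^ 4 = μ * ∫ x, ‖φ x‖ ^ 4 := integral_quart_scale μ hμ φ
      have hfd : ∫ x, ‖fderiv ℝ ψ x‖ ^ 2 = μ * ∫ x, ‖fderiv ℝ φ x‖ ^ 2 :=
        integral_fderiv_scale μ hμ φ hdφ
      have hWint : ∀ W : R3 → ℝ,
          ∫ x, W (μ • x) * ‖ψ x‖ ^ 2 = μ⁻¹ * ∫ x, W x * ‖φ x‖ ^ 2 :=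
        fun W => integral_W_scale μ hμ φ W
      have hE : ∫ x, μ ^ 2 * xdV V (μ • x) * ‖ψ x‖ ^ 2
          = μ ^ 2 * ∫ x, xdV V (μ • x) * ‖ψ x‖ ^ 2 := by
        simp_rw [mul_assoc]
        exact MeasureTheory.integral_const_mul _ _
      have hF : ∫ x, μ ^ 2 * (xdV V (μ • x) + 2 * V (μ • x)) * ‖ψ x‖ ^ 2
          = μ ^ 2 * ∫ x, (xdV V (μ • x) + 2 * V (μ • x)) * ‖ψ x‖ ^ 2 := by
        simp_rw [mul_assoc]
        exact MeasureTheory.integral_const_mul _ _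
      refine ⟨ψ, hdψ, ?_, ?_, ?_, ?_, ?_, ?_, ?_⟩
      · exact integrable_sq_scale μ hμ φ hi2
      · exact integrable_fderiv_scale μ hμ φ hdφ hid
      · exact integrable_quart_scale μ hμ φ hi4
      · -- Mfun ψ ≤ 1
        rw [Mfun] at hM ⊢
        rw [hsq]
        nlinarith [mul_le_mul_of_nonneg_left hM hμ'.le, inv_mul_cancel₀ hμ.ne']
      · -- K02 ψ ≤ ...
        rw [K2, H0, Gfun] at hK
        rw [K02, H0, Gfun, hE, hfd, hqt, hWint (xdV V)]
        have h2 : μ ^ 2 * (μ⁻¹ * ∫ x, xdV V x * ‖φ x‖ ^ 2)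
            = μ * ∫ x, xdV V x * ‖φ x‖ ^ 2 := by
          field_simp
        rw [h2]
        have key := mul_le_mul_of_nonneg_left hK hμ.le
        nlinarith [key]
      · -- μ ≤ Gfun ψ
        rw [Gfun] at hG ⊢
        rw [hqt]
        nlinarith
      · -- value
        rw [← hrr, hr₀, hF]
        rw [IV, Gfun, Gfun, hqt, hWint (fun y => xdV V y + 2 * V y)]
        field_simp
  rw [hset, Real.sInf_smul_of_nonneg hμ.le, smul_eq_mul]

end
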